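/- Let X be a metric ℂ-vector space of complex-valued functions on D(0,r) containing the polynomials, with polynomials dense and point evaluations at all |w| < r continuous. Let T : X → Hol(𝔻) be a continuous linear map such that (T((z − α)^n))(ζ) ≠ 0 for all n ≥ 0, all α with |α| ≥ r, and all ζ ∈ 𝔻. Then there exist holomorphic functions φ : 𝔻 → D(0,r) and ψ : 𝔻 → ℂ∖{0} such that Tf = ψ·(f ∘ φ) for all f ∈ X. -/

import Mathlib

open Metric

/-- Lower bound on binomial coefficients. -/
lemma aux_choose_lb : ∀ (a b : ℕ), 0 < b → b ≤ a → a - b + 1 ≤ a.choose b := by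
  intro a
  induction a with
  | zero => intro b hb hba; omega
  | succ a IH =>
    intro b hb hba
    rcases Nat.eq_or_lt_of_le hba with h | h
    · subst h; simp [Nat.choose_self]
    · have hba' : b ≤ a := by omega
      obtain ⟨b', rfl⟩ : ∃ b', b = b' + 1 := ⟨b - 1, by omega⟩
      rcases Nat.eq_zero_or_pos b' with rfl | hb'
      · simp [Nat.choose_one_right]
      · have h1 := IH (b' + 1) (by omega) hba'
        have h2 : 0 < a.choose b' := Nat.choose_pos (by omega)
        rw [Nat.choose_succ_succ]
        simp only [Nat.succ_eq_add_one] at h1 ⊢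
        omega

/-- Special case of Newton's identities for multisets of complex numbers. -/
lemma aux_newton (s : Multiset ℂ) (n : ℕ) (hn : 0 < n)
    (h : ∀ j, 0 < j → j < n → s.esymm j = 0) :
    (s.map (· ^ n)).sum = (-1) ^ (n + 1) * (n : ℂ) * s.esymm n := by
  classical
  obtain ⟨l, rfl⟩ : ∃ l : List ℂ, (l : Multiset ℂ) = s := ⟨s.toList, s.coe_toList⟩
  have huniv : (Multiset.map l.get Finset.univ.val) = (l : Multiset ℂ) := by
    have h1 : (Finset.univ.val : Multiset (Fin l.length)) =
        ((List.finRange l.length : List (Fin l.length)) : Multiset (Fin l.length)) := rfl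
    rw [h1, Multiset.map_coe, List.map_get_finRange]
  have h1 := congrArg (MvPolynomial.aeval l.get)
    (MvPolynomial.psum_eq_mul_esymm_sub_sum (Fin l.length) ℂ n hn)
  simp only [MvPolynomial.psum, map_sum, map_pow, map_mul, map_sub, MvPolynomial.aeval_X,
    MvPolynomial.aeval_esymm_eq_multiset_esymm, map_neg, map_one, map_natCast, huniv] at h1
  have h2 : ∑ a ∈ Finset.filter (fun a => a.1 ∈ Set.Ioo 0 n) (Finset.HasAntidiagonal.antidiagonal n),
      (-1 : ℂ) ^ a.1 * (l : Multiset ℂ).esymm a.1 * ∑ i, l.get i ^ a.2 = 0 := by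
    refine Finset.sum_eq_zero fun a ha => ?_
    rw [Finset.mem_filter] at ha
    rw [h a.1 ha.2.1 ha.2.2, mul_zero, zero_mul]
  rw [h2, sub_zero] at h1
  have h3 : ∑ i, l.get i ^ n = ((l : Multiset ℂ).map (· ^ n)).sum := by
    rw [Finset.sum, ← huniv, Multiset.map_map]
    rfl
  rw [h3] at h1
  exact h1

open Polynomial in
/-- The key pointwise lemma: a linear functional on polynomials not vanishing on
powers `(X - α)^n` for `‖α‖ ≥ r` is a weighted point evaluation. -/
lemma aux_key (r : ℝ) (hr : 0 < r) (L : Polynomial ℂ →ₗ[ℂ] ℂ)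
    (hL : ∀ (n : ℕ) (α : ℂ), r ≤ ‖α‖ → L ((X - C α) ^ n) ≠ 0) :
    L 1 ≠ 0 ∧ ‖L X / L 1‖ < r ∧
      ∀ p : Polynomial ℂ, L p = L 1 * p.eval (L X / L 1) := by
  have hc : L 1 ≠ 0 := by
    have := hL 0 r (by rw [Complex.norm_real]; simp [abs_of_pos hr])
    simpa using this
  set c := L 1 with hcdef
  set φ := L X / c with hφdef
  have hLC : ∀ a : ℂ, L (C a) = a * c := by
    intro a
    have h1 : C a = a • (1 : Polynomial ℂ) := by rw [smul_eq_C_mul, mul_one]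
    rw [h1, map_smul, smul_eq_mul]
  have hLX : L X = c * φ := by
    rw [hφdef]; field_simp
  have hφ : ‖φ‖ < r := by
    by_contra hcon
    push_neg at hcon
    apply hL 1 φ hcon
    rw [pow_one, map_sub, hLC, hLX]
    ring
  set b : ℕ → ℂ := fun k => L ((X - C φ) ^ k) with hb
  have hb0 : b 0 = c := by simp [hb, hcdef]
  have hb1 : b 1 = 0 := by
    rw [hb]
    simp only [pow_one, map_sub, hLC, hLX]
    ring
  have hbn : ∀ n, 0 < n → b n = 0 := by
    intro n
    induction n using Nat.strong_induction_on with
    | _ n IH =>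
    intro hn
    rcases Nat.lt_or_ge n 2 with h2 | h2
    · interval_cases n
      exact hb1
    by_contra hd
    have hcnorm : (0 : ℝ) < ‖c‖ := norm_pos_iff.mpr hc
    have hdnorm : (0 : ℝ) < ‖b n‖ := norm_pos_iff.mpr hd
    -- Main estimate
    have main : ∀ m : ℕ, n ≤ m →
        (n : ℝ) * (m.choose n) * ‖b n‖ ≤ (m : ℝ) * (2 * r) ^ n * ‖c‖ := by
      intro m hm
      set G : Polynomial ℂ :=
        ∑ k ∈ Finset.range (m + 1), C ((m.choose k : ℂ) * b k / c) * X ^ (m - k) with hG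
      have hcoeff : ∀ j, j ≤ m → G.coeff (m - j) = (m.choose j : ℂ) * b j / c := by
        intro j hj
        rw [hG, finset_sum_coeff]
        rw [Finset.sum_eq_single_of_mem j (Finset.mem_range.mpr (by omega))]
        · rw [coeff_C_mul, coeff_X_pow, if_pos rfl, mul_one]
        · intro k hk hkj
          rw [Finset.mem_range] at hk
          rw [coeff_C_mul, coeff_X_pow, if_neg (by omega), mul_zero]
      have hcm : G.coeff m = 1 := by
        have h1 := hcoeff 0 (Nat.zero_le m)
        simp only [Nat.sub_zero, Nat.choose_zero_right, Nat.cast_one, one_mul, hb0] at h1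
        rw [h1, div_self hc]
      have hdle : G.natDegree ≤ m := by
        refine natDegree_sum_le_of_forall_le _ _ fun k hk => ?_
        refine le_trans (natDegree_C_mul_le _ _) ?_
        rw [natDegree_X_pow]
        omega
      have hmonic : G.Monic := monic_of_natDegree_le_of_coeff_eq_one m hdle hcm
      have hdeg : G.natDegree = m :=
        le_antisymm hdle (le_natDegree_of_ne_zero (by rw [hcm]; exact one_ne_zero))
      have heval : ∀ β : ℂ, c * G.eval β = L ((X - C (φ - β)) ^ m) := by
        intro β
        have hX : (X : Polynomial ℂ) - C (φ - β) = (X - C φ) + C β := by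
          rw [map_sub]; ring
        have hterm : ∀ k, L ((X - C φ) ^ k * (C β) ^ (m - k) * ((m.choose k : ℕ) : Polynomial ℂ))
            = β ^ (m - k) * (m.choose k : ℂ) * b k := by
          intro k
          have h1 : (X - C φ) ^ k * (C β) ^ (m - k) * ((m.choose k : ℕ) : Polynomial ℂ)
              = (β ^ (m - k) * (m.choose k : ℂ)) • ((X - C φ) ^ k) := by
            rw [smul_eq_C_mul, ← C_eq_natCast, ← map_pow, map_mul]
            ring
          rw [h1, map_smul, smul_eq_mul]
        rw [hX, add_pow, map_sum]
        simp only [hterm]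
        rw [hG, eval_finset_sum, Finset.mul_sum]
        refine Finset.sum_congr rfl fun k _ => ?_
        simp only [eval_mul, eval_C, eval_pow, eval_X]
        field_simp
      have hroots : ∀ β ∈ G.roots, ‖β‖ < 2 * r := by
        intro β hβ
        have hG0 : G ≠ 0 := hmonic.ne_zero
        have hev : G.eval β = 0 := (mem_roots hG0).mp hβ
        have h1 : L ((X - C (φ - β)) ^ m) = 0 := by rw [← heval, hev, mul_zero]
        have h2 : ‖φ - β‖ < r := by
          by_contra hcon
          push_neg at hcon
          exact hL m (φ - β) hcon h1
        calc ‖β‖ = ‖φ - (φ - β)‖ := by ring_nf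
          _ ≤ ‖φ‖ + ‖φ - β‖ := norm_sub_le _ _
          _ < r + r := add_lt_add hφ h2
          _ = 2 * r := by ring
      have hsplit : Splits G := IsAlgClosed.splits G
      have hcard : Multiset.card G.roots = m := by
        rw [splits_iff_card_roots.mp hsplit, hdeg]
      have hfact : G = (Multiset.map (fun a => X - C a) G.roots).prod :=
        (prod_multiset_X_sub_C_of_monic_of_roots_card_eq hmonic (splits_iff_card_roots.mp hsplit)).symm
      have hesymm : ∀ j, j ≤ m → G.roots.esymm j = (-1) ^ j * ((m.choose j : ℂ) * b j / c) := by
        intro j hj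
        have hcj : Multiset.card G.roots - (m - j) = j := by rw [hcard]; omega
        have h1 : G.coeff (m - j) = (-1) ^ j * G.roots.esymm j := by
          conv_lhs => rw [hfact]
          rw [Multiset.prod_X_sub_C_coeff G.roots (by rw [hcard]; omega), hcj]
        rw [hcoeff j hj] at h1
        have h2 : ((-1 : ℂ) ^ j) * ((-1 : ℂ) ^ j) = 1 := by
          rw [← pow_add, ← two_mul, pow_mul]
          norm_num
        calc G.roots.esymm j = ((-1 : ℂ) ^ j * (-1 : ℂ) ^ j) * G.roots.esymm j := by rw [h2, one_mul]
          _ = (-1) ^ j * ((m.choose j : ℂ) * b j / c) := by rw [mul_assoc, ← h1]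
      have hvan : ∀ j, 0 < j → j < n → G.roots.esymm j = 0 := by
        intro j hj1 hj2
        rw [hesymm j (by omega), IH j hj2 hj1]
        simp
      have hnewton := aux_newton G.roots n (by omega) hvan
      rw [hesymm n hm] at hnewton
      have hsumbound : ‖(G.roots.map (· ^ n)).sum‖ ≤ (m : ℝ) * (2 * r) ^ n := by
        refine le_trans (norm_multiset_sum_le _) ?_
        have h1 : ∀ x ∈ (G.roots.map (· ^ n)).map norm, x ≤ (2 * r) ^ n := by
          intro x hx
          rw [Multiset.map_map, Multiset.mem_map] at hx
          obtain ⟨β, hβ, rfl⟩ := hx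
          simp only [Function.comp_apply, norm_pow]
          exact pow_le_pow_left₀ (norm_nonneg _) (hroots β hβ).le n
        refine le_trans (Multiset.sum_le_card_nsmul _ _ h1) ?_
        rw [Multiset.card_map, Multiset.card_map, hcard, nsmul_eq_mul]
      rw [hnewton] at hsumbound
      have h3 : ‖(-1 : ℂ) ^ (n + 1) * (n : ℂ) * ((-1) ^ n * ((m.choose n : ℂ) * b n / c))‖
          = (n : ℝ) * (m.choose n) * ‖b n‖ / ‖c‖ := by
        simp only [norm_mul, norm_div, norm_pow, norm_neg, norm_one, one_pow, one_mul,
          Complex.norm_natCast]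
        ring
      rw [h3] at hsumbound
      rw [div_le_iff₀ hcnorm] at hsumbound
      exact hsumbound
    -- contradiction from the estimate
    obtain ⟨M, hM⟩ := exists_nat_gt ((2 * r) ^ n * ‖c‖ / ‖b n‖)
    set m := M + n with hm
    have h1 := main m (by omega)
    have hchoose : (n : ℝ) * (m.choose n) = (m : ℝ) * ((m - 1).choose (n - 1)) := by
      have h4 := Nat.add_one_mul_choose_eq (m - 1) (n - 1)
      have hs1 : m - 1 + 1 = m := by omega
      have hs2 : n - 1 + 1 = n := by omega
      rw [hs1, hs2] at h4
      have h5 : (m : ℝ) * ((m - 1).choose (n - 1)) = (m.choose n : ℝ) * n := by exact_mod_cast h4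
      linarith
    have hlb : (M + 1 : ℝ) ≤ ((m - 1).choose (n - 1) : ℝ) := by
      have := aux_choose_lb (m - 1) (n - 1) (by omega) (by omega)
      have h6 : (m - 1) - (n - 1) + 1 = M + 1 := by omega
      rw [h6] at this
      exact_mod_cast this
    have hmpos : (0 : ℝ) < m := by
      have : 0 < m := by omega
      exact_mod_cast this
    have hstrict : (m : ℝ) * (2 * r) ^ n * ‖c‖ < (m : ℝ) * ((m - 1).choose (n - 1)) * ‖b n‖ := by
      have h7 : (2 * r) ^ n * ‖c‖ < (M + 1) * ‖b n‖ := by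
        rw [div_lt_iff₀ hdnorm] at hM
        calc (2 * r) ^ n * ‖c‖ < M * ‖b n‖ := hM
          _ ≤ (M + 1) * ‖b n‖ := by nlinarith [hdnorm]
      calc (m : ℝ) * (2 * r) ^ n * ‖c‖ = (m : ℝ) * ((2 * r) ^ n * ‖c‖) := by ring
        _ < (m : ℝ) * ((M + 1) * ‖b n‖) := by
            exact mul_lt_mul_of_pos_left h7 hmpos
        _ ≤ (m : ℝ) * (((m - 1).choose (n - 1) : ℝ) * ‖b n‖) := by
            have := mul_le_mul_of_nonneg_right hlb hdnorm.le
            nlinarith [hmpos]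
        _ = (m : ℝ) * ((m - 1).choose (n - 1)) * ‖b n‖ := by ring
    rw [hchoose] at h1
    linarith
  refine ⟨hc, hφ, fun p => ?_⟩
  conv_lhs => rw [← Polynomial.sum_taylor_eq p φ]
  rw [Polynomial.sum_def, map_sum]
  have hterm : ∀ i, L (C ((taylor φ p).coeff i) * (X - C φ) ^ i) = ((taylor φ p).coeff i) * b i := by
    intro i
    rw [← smul_eq_C_mul, map_smul, smul_eq_mul, hb]
  rw [Finset.sum_congr rfl fun i _ => hterm i]
  rw [Finset.sum_eq_single 0]
  · rw [hb0, taylor_coeff_zero, mul_comm]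
  · intro i _ hi
    rw [hbn i (Nat.pos_of_ne_zero hi), mul_zero]
  · intro h0
    rw [Polynomial.notMem_support_iff.mp h0, zero_mul]

/-- Weighted composition operators: if T maps X continuously into Hol(𝔻) and
(T(z-α)^n)(ζ) ≠ 0 for all n ≥ 0, |α| ≥ r, ζ ∈ 𝔻, then Tf = ψ·(f∘φ) for
holomorphic φ : 𝔻 → D(0,r) and ψ : 𝔻 → ℂ∖{0}. -/
theorem weighted_composition (r : ℝ) (hr : 0 < r)
    (E : Type) [AddCommGroup E] [Module ℂ E] [MetricSpace E]
    (ι : E →ₗ[ℂ] ({z : ℂ // ‖z‖ < r} → ℂ)) (hι : Function.Injective ι)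
    (P : Polynomial ℂ →ₗ[ℂ] E)
    (hP : ∀ (p : Polynomial ℂ) (z : {z : ℂ // ‖z‖ < r}), ι (P p) z = p.eval z.1)
    (heval : ∀ w : {z : ℂ // ‖z‖ < r}, Continuous fun f : E => ι f w)
    (hdense : DenseRange P)
    (T : E →ₗ[ℂ] (ℂ → ℂ))
    (hThol : ∀ f : E, DifferentiableOn ℂ (T f) (ball (0 : ℂ) 1))
    (hTcont : ∀ ζ ∈ ball (0 : ℂ) 1, Continuous fun f : E => T f ζ)
    (hT : ∀ n : ℕ, ∀ α : ℂ, r ≤ ‖α‖ → ∀ ζ ∈ ball (0 : ℂ) 1,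
      T (P ((Polynomial.X - Polynomial.C α) ^ n)) ζ ≠ 0) :
    ∃ (φ ψ : ℂ → ℂ), DifferentiableOn ℂ φ (ball (0 : ℂ) 1) ∧
      DifferentiableOn ℂ ψ (ball (0 : ℂ) 1) ∧
      (∀ ζ ∈ ball (0 : ℂ) 1, ψ ζ ≠ 0) ∧
      ∃ hφ : ∀ ζ ∈ ball (0 : ℂ) 1, ‖φ ζ‖ < r,
        ∀ (f : E) (ζ : ℂ) (hζ : ζ ∈ ball (0 : ℂ) 1),
          T f ζ = ψ ζ * ι f ⟨φ ζ, hφ ζ hζ⟩ := by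
  classical
  set ψ : ℂ → ℂ := T (P 1) with hψdef
  set φ : ℂ → ℂ := fun ζ => T (P Polynomial.X) ζ / ψ ζ with hφdef
  have hkey : ∀ ζ ∈ ball (0 : ℂ) 1, ψ ζ ≠ 0 ∧ ‖φ ζ‖ < r ∧
      ∀ p : Polynomial ℂ, T (P p) ζ = ψ ζ * p.eval (φ ζ) := by
    intro ζ hζ
    set L : Polynomial ℂ →ₗ[ℂ] ℂ := (LinearMap.proj ζ).comp (T.comp P) with hLdef
    have hLeq : ∀ p : Polynomial ℂ, L p = T (P p) ζ := fun p => rfl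
    have hL : ∀ (n : ℕ) (α : ℂ), r ≤ ‖α‖ →
        L ((Polynomial.X - Polynomial.C α) ^ n) ≠ 0 := by
      intro n α hα
      rw [hLeq]
      exact hT n α hα ζ hζ
    obtain ⟨h1, h2, h3⟩ := aux_key r hr L hL
    have he1 : L 1 = ψ ζ := rfl
    have he2 : L Polynomial.X = T (P Polynomial.X) ζ := rfl
    have he3 : L Polynomial.X / L 1 = φ ζ := rfl
    rw [he1] at h1
    rw [he3] at h2
    refine ⟨h1, h2, fun p => ?_⟩
    have := h3 p
    rw [hLeq, he3, he1] at this
    exact this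
  have hψne : ∀ ζ ∈ ball (0 : ℂ) 1, ψ ζ ≠ 0 := fun ζ h => (hkey ζ h).1
  have hψholo : DifferentiableOn ℂ ψ (ball (0 : ℂ) 1) := hThol (P 1)
  have hφholo : DifferentiableOn ℂ φ (ball (0 : ℂ) 1) :=
    DifferentiableOn.div (hThol (P Polynomial.X)) hψholo hψne
  have hφlt : ∀ ζ ∈ ball (0 : ℂ) 1, ‖φ ζ‖ < r := fun ζ h => (hkey ζ h).2.1
  refine ⟨φ, ψ, hφholo, hψholo, hψne, hφlt, ?_⟩
  intro f ζ hζ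
  have hcont1 : Continuous fun f : E => T f ζ := hTcont ζ hζ
  have hcont2 : Continuous fun f : E => ψ ζ * ι f ⟨φ ζ, hφlt ζ hζ⟩ :=
    continuous_const.mul (heval ⟨φ ζ, hφlt ζ hζ⟩)
  have hagree : (fun f : E => T f ζ) ∘ P = (fun f : E => ψ ζ * ι f ⟨φ ζ, hφlt ζ hζ⟩) ∘ P := by
    funext p
    simp only [Function.comp_apply]
    rw [(hkey ζ hζ).2.2 p, hP p]
  exact congrFun (hdense.equalizer hcont1 hcont2 hagree) f
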